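/- arXiv:0811.4706 — 10 statements merged into one kernel-verified Lean document; each statement's English description precedes it below -/
import Mathlib

section
/- For every vector c = (c₁,…,c_N) of nonnegative reals with Σ_k cₖ > 0, all indices i ≠ j with cᵢ > cⱼ, and every α with 0 < α < (cᵢ − cⱼ)/2, the Robin Hood operation strictly decreases the ratio ℓ²/ℓ¹: √(Σ_{k≠i,j} cₖ² + (cᵢ − α)² + (cⱼ + α)²) / (Σ_k cₖ) < √(Σ_k cₖ²) / (Σ_k cₖ). Hence the measure S(c) = √(Σ_k cₖ²)/Σ_k cₖ satisfies D1 (Robin Hood). -/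
open Finset

/-- The ℓ²/ℓ¹ measure satisfies D1 (Robin Hood): a Robin Hood operation strictly
decreases √(Σ cₖ²)/(Σ cₖ). -/
theorem l2l1_robinHood (N : ℕ) (c : Fin N → ℝ) (hc : ∀ k, 0 ≤ c k)
    (hsum : 0 < ∑ k, c k)
    (i j : Fin N) (hij : i ≠ j) (hgt : c j < c i)
    (α : ℝ) (hα0 : 0 < α) (hα : α < (c i - c j) / 2) :
    Real.sqrt (∑ k ∈ ({i, j}ᶜ : Finset (Fin N)), c k ^ 2
        + (c i - α) ^ 2 + (c j + α) ^ 2) / (∑ k, c k)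
      < Real.sqrt (∑ k, c k ^ 2) / (∑ k, c k) := by
  have hsplit : (∑ k, c k ^ 2)
      = ∑ k ∈ ({i, j}ᶜ : Finset (Fin N)), c k ^ 2 + (c i ^ 2 + c j ^ 2) := by
    rw [← Finset.sum_compl_add_sum ({i, j} : Finset (Fin N)) (fun k => c k ^ 2),
      Finset.sum_pair hij]
  have hlt : ∑ k ∈ ({i, j}ᶜ : Finset (Fin N)), c k ^ 2 + (c i - α) ^ 2 + (c j + α) ^ 2
      < ∑ k, c k ^ 2 := by
    rw [hsplit]; nlinarith
  have hnn : 0 ≤ ∑ k ∈ ({i, j}ᶜ : Finset (Fin N)), c k ^ 2 + (c i - α) ^ 2 + (c j + α) ^ 2 := by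
    have : 0 ≤ ∑ k ∈ ({i, j}ᶜ : Finset (Fin N)), c k ^ 2 :=
      Finset.sum_nonneg fun k _ => sq_nonneg _
    nlinarith [sq_nonneg (c i - α), sq_nonneg (c j + α)]
  exact div_lt_div_of_pos_right (Real.sqrt_lt_sqrt hnn hlt) hsum
end

section
/- The kurtosis measure κ₄ satisfies D3 (Rising Tide): for every vector c = (c₁,…,c_N) of positive reals whose entries are not all equal and every α > 0, Σ_i (cᵢ + α)⁴ / (Σ_i (cᵢ + α)²)² < Σ_i cᵢ⁴ / (Σ_i cᵢ²)². -/
open Finset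


lemma key_ineq {N : ℕ} (a : Fin N → ℝ) (ha : ∀ k, 0 < a k) {i j : Fin N} (hij : a i ≠ a j) :
    (∑ k, a k ^ 3) * (∑ k, a k ^ 2) < (∑ k, a k ^ 4) * (∑ k, a k) := by
  have h1 : ∀ p q : Fin N, a p * a q * (a p + a q) * (a p - a q)^2
      = (a p^4 * a q + a q^4 * a p) - (a p^3 * a q^2 + a q^3 * a p^2) := by
    intro p q; ring
  have hid : ∑ p : Fin N, ∑ q : Fin N, a p * a q * (a p + a q) * (a p - a q)^2
      = 2*((∑ k, a k ^ 4) * (∑ k, a k) - (∑ k, a k ^ 3) * (∑ k, a k ^ 2)) := by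
    simp_rw [h1, Finset.sum_sub_distrib, Finset.sum_add_distrib]
    rw [show (∑ p : Fin N, ∑ q : Fin N, a q ^ 4 * a p) = ∑ p : Fin N, ∑ q : Fin N, a p ^ 4 * a q
        from Finset.sum_comm,
        show (∑ p : Fin N, ∑ q : Fin N, a q ^ 3 * a p ^ 2) = ∑ p : Fin N, ∑ q : Fin N, a p ^ 3 * a q ^ 2
        from Finset.sum_comm,
        ← Finset.sum_mul_sum, ← Finset.sum_mul_sum]
    ring
  have hpos : 0 < ∑ p : Fin N, ∑ q : Fin N, a p * a q * (a p + a q) * (a p - a q)^2 := by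
    have hterm : ∀ p q : Fin N, 0 ≤ a p * a q * (a p + a q) * (a p - a q)^2 := by
      intro p q
      have := (ha p).le; have := (ha q).le
      exact mul_nonneg (mul_nonneg (mul_nonneg (ha p).le (ha q).le)
        (by linarith [ha p, ha q])) (sq_nonneg _)
    apply Finset.sum_pos' (fun p _ => Finset.sum_nonneg fun q _ => hterm p q)
    refine ⟨i, Finset.mem_univ i, ?_⟩
    apply Finset.sum_pos' (fun q _ => hterm i q)
    refine ⟨j, Finset.mem_univ j, ?_⟩
    have h2 : (0:ℝ) < (a i - a j)^2 :=
      lt_of_le_of_ne (sq_nonneg _) (Ne.symm (pow_ne_zero 2 (sub_ne_zero.mpr hij)))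
    exact mul_pos (mul_pos (mul_pos (ha i) (ha j)) (by linarith [ha i, ha j])) h2
  linarith [hpos, hid]

/-- The kurtosis sparsity measure κ₄(d) = (Σ dᵢ⁴)/(Σ dᵢ²)². -/
noncomputable def kappa4 {N : ℕ} (d : Fin N → ℝ) : ℝ :=
  (∑ k, d k ^ 4) / (∑ k, d k ^ 2) ^ 2

/-- κ₄ satisfies D3 (Rising Tide): for a vector of positive reals whose entries are not
all equal, adding a constant α > 0 to every coefficient strictly decreases κ₄. -/
theorem kappa4_risingTide (N : ℕ) (c : Fin N → ℝ) (hc : ∀ k, 0 < c k)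
    (hne : ∃ i j, c i ≠ c j) (α : ℝ) (hα : 0 < α) :
    kappa4 (fun k => c k + α) < kappa4 c := by
  obtain ⟨i, j, hij⟩ := hne
  set g : ℝ → ℝ := fun x => ∑ k, (c k + x) ^ 4 with hgdef
  set h : ℝ → ℝ := fun x => ∑ k, (c k + x) ^ 2 with hhdef
  set f : ℝ → ℝ := fun x => g x / (h x) ^ 2 with hfdef
  have hpos : ∀ x ∈ Set.Ici (0:ℝ), ∀ k, 0 < c k + x := fun x hx k => by
    have := hc k; simp at hx; linarith
  have hhpos : ∀ x ∈ Set.Ici (0:ℝ), 0 < h x :=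
    fun x hx => Finset.sum_pos (fun k _ => pow_pos (hpos x hx k) 2) ⟨i, Finset.mem_univ i⟩
  -- derivatives
  have hg' : ∀ x : ℝ, HasDerivAt g (4 * ∑ k, (c k + x) ^ 3) x := by
    intro x
    have : HasDerivAt g (∑ k, 4 * (c k + x) ^ 3) x := by
      apply HasDerivAt.fun_sum
      intro k _
      have hb : HasDerivAt (fun x : ℝ => c k + x) 1 x := (hasDerivAt_id x).const_add (c k)
      simpa using hb.fun_pow 4
    simpa [Finset.mul_sum] using this
  have hh' : ∀ x : ℝ, HasDerivAt h (2 * ∑ k, (c k + x)) x := by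
    intro x
    have : HasDerivAt h (∑ k, 2 * (c k + x)) x := by
      apply HasDerivAt.fun_sum
      intro k _
      have hb : HasDerivAt (fun x : ℝ => c k + x) 1 x := (hasDerivAt_id x).const_add (c k)
      simpa using hb.fun_pow 2
    simpa [Finset.mul_sum] using this
  have hanti : StrictAntiOn f (Set.Ici 0) := by
    apply strictAntiOn_of_deriv_neg (convex_Ici 0)
    · apply ContinuousOn.div
      · exact fun x _ => ((hg' x).continuousAt).continuousWithinAt
      · exact fun x _ => (((hh' x).continuousAt).pow 2).continuousWithinAt
      · intro x hx
        exact pow_ne_zero 2 (ne_of_gt (hhpos x hx))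
    · intro x hx
      rw [interior_Ici] at hx
      have hxIci : x ∈ Set.Ici (0:ℝ) := Set.Ioi_subset_Ici_self hx
      have hapos : ∀ k, 0 < c k + x := hpos x hxIci
      have hij' : c i + x ≠ c j + x := fun e => hij (by linarith [add_right_cancel e])
      have hkey := key_ineq (fun k => c k + x) hapos hij'
      have hd2 : HasDerivAt (fun x => (h x) ^ 2) (2 * h x * (2 * ∑ k, (c k + x))) x := by
        simpa [mul_comm, mul_assoc] using (hh' x).fun_pow 2
      have hdf : HasDerivAt f
          (((4 * ∑ k, (c k + x) ^ 3) * (h x) ^ 2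
            - g x * (2 * h x * (2 * ∑ k, (c k + x)))) / ((h x) ^ 2) ^ 2) x :=
        (hg' x).div hd2 (pow_ne_zero 2 (ne_of_gt (hhpos x hxIci)))
      rw [hdf.deriv]
      apply div_neg_of_neg_of_pos
      · have hS2 := hhpos x hxIci
        simp only [hgdef, hhdef] at *
        nlinarith [hkey, hS2]
      · exact pow_pos (pow_pos (hhpos x hxIci) 2) 2
  have h0 : (0:ℝ) ∈ Set.Ici (0:ℝ) := Set.self_mem_Ici
  have hα' : α ∈ Set.Ici (0:ℝ) := le_of_lt hα
  have := hanti h0 hα' hα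
  simp only [hfdef, hgdef, hhdef, kappa4] at this ⊢
  simpa using this
end

section
/- The kurtosis measure κ₄ satisfies P1 (Bill Gates): for every vector c = (c₁,…,c_N) of positive reals with N ≥ 2 and every index i, there exists β > 0 such that for all α > 0, κ₄ of the vector obtained by replacing cᵢ with cᵢ + β + α is strictly greater than κ₄ of the vector obtained by replacing cᵢ with cᵢ + β. In particular any β with cᵢ + β > √((Σ_{j≠i} cⱼ⁴)/(Σ_{j≠i} cⱼ²)) works. -/
open Finset

lemma kappa4_key (A B x y : ℝ) (hA : 0 < A) (hB : 0 < B)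
    (hx : A < B * x ^ 2) (hy : A < B * y ^ 2) (hxy : x ^ 2 < y ^ 2) :
    (x ^ 4 + A) / (x ^ 2 + B) ^ 2 < (y ^ 4 + A) / (y ^ 2 + B) ^ 2 := by
  have hx2 : (0:ℝ) ≤ x ^ 2 := sq_nonneg x
  have hy2 : (0:ℝ) ≤ y ^ 2 := sq_nonneg y
  rw [div_lt_div_iff₀ (by positivity) (by positivity)]
  nlinarith [mul_pos (mul_pos (sub_pos.2 hxy) (sub_pos.2 hx))
      (by nlinarith : (0:ℝ) < 2 * B * y ^ 2 + B ^ 2 - A),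
    mul_pos (mul_pos (sub_pos.2 hxy) (by positivity : (0:ℝ) < A + B ^ 2))
      (sub_pos.2 hy), sq_nonneg (x*y), sq_nonneg (x^2 - y^2)]

/-- κ₄ satisfies P1 (Bill Gates): there exists β > 0 such that further increasing the
i-th coefficient beyond cᵢ + β strictly increases κ₄; in particular any β > 0 with
cᵢ + β > √((Σ_{j≠i} cⱼ⁴)/(Σ_{j≠i} cⱼ²)) works. -/
theorem kappa4_billGates (N : ℕ) (hN : 2 ≤ N) (c : Fin N → ℝ)
    (hc : ∀ k, 0 < c k) (i : Fin N) :
    (∃ β > 0, ∀ α > 0,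
      kappa4 (Function.update c i (c i + β + α)) >
        kappa4 (Function.update c i (c i + β))) ∧
    (∀ β > 0,
      Real.sqrt ((∑ j ∈ ({i}ᶜ : Finset (Fin N)), c j ^ 4) /
          (∑ j ∈ ({i}ᶜ : Finset (Fin N)), c j ^ 2)) < c i + β →
      ∀ α > 0,
        kappa4 (Function.update c i (c i + β + α)) >
          kappa4 (Function.update c i (c i + β))) := by
  set A := ∑ j ∈ ({i}ᶜ : Finset (Fin N)), c j ^ 4 with hAdef
  set B := ∑ j ∈ ({i}ᶜ : Finset (Fin N)), c j ^ 2 with hBdef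
  have hne : ({i}ᶜ : Finset (Fin N)).Nonempty := by
    rw [← Finset.card_pos, Finset.card_compl, Finset.card_singleton, Fintype.card_fin]
    omega
  have hA : 0 < A := Finset.sum_pos (fun j _ => pow_pos (hc j) 4) hne
  have hB : 0 < B := Finset.sum_pos (fun j _ => pow_pos (hc j) 2) hne
  have hupd : ∀ t : ℝ, kappa4 (Function.update c i t) = (t ^ 4 + A) / (t ^ 2 + B) ^ 2 := by
    intro t
    have h4 : ∑ k, Function.update c i t k ^ 4 = t ^ 4 + A := by
      rw [hAdef, Finset.compl_eq_univ_sdiff,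
        ← Finset.sum_update_of_mem (Finset.mem_univ i) (fun k => c k ^ 4) (t ^ 4)]
      exact Finset.sum_congr rfl fun k _ => Function.apply_update (fun _ x => x ^ 4) c i t k
    have h2 : ∑ k, Function.update c i t k ^ 2 = t ^ 2 + B := by
      rw [hBdef, Finset.compl_eq_univ_sdiff,
        ← Finset.sum_update_of_mem (Finset.mem_univ i) (fun k => c k ^ 2) (t ^ 2)]
      exact Finset.sum_congr rfl fun k _ => Function.apply_update (fun _ x => x ^ 2) c i t k
    rw [kappa4, h4, h2]
  have hmain : ∀ β > 0, Real.sqrt (A / B) < c i + β → ∀ α > 0,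
      kappa4 (Function.update c i (c i + β + α)) >
        kappa4 (Function.update c i (c i + β)) := by
    intro β hβ hsq α hα
    set x := c i + β with hxdef
    have hx0 : 0 < x := by have := hc i; linarith
    have hy0 : 0 < x + α := by linarith
    have hx2 : A / B < x ^ 2 := by
      have := Real.sq_sqrt (le_of_lt (div_pos hA hB))
      nlinarith [Real.sqrt_nonneg (A/B)]
    have hxA : A < B * x ^ 2 := by
      rwa [div_lt_iff₀ hB, mul_comm] at hx2
    have hyA : A < B * (x + α) ^ 2 := by nlinarith [mul_pos hB (mul_pos hα hx0), mul_pos hB (mul_pos hα hα)]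
    rw [hupd, hupd]
    exact kappa4_key A B x (x + α) hA hB hxA hyA (by nlinarith)
  constructor
  · refine ⟨Real.sqrt (A / B) + 1, by positivity, fun α hα => ?_⟩
    exact hmain _ (by positivity) (by have := hc i; linarith) α hα
  · exact hmain
end

section
/- The Gaussian entropy measure H_G satisfies D1 (Robin Hood): for every vector c = (c₁,…,c_N) of positive reals, all indices i ≠ j with cᵢ > cⱼ, and every α with 0 < α < (cᵢ − cⱼ)/2, −Σ_{k≠i,j} log(cₖ²) − log((cᵢ − α)²) − log((cⱼ + α)²) < −Σ_k log(cₖ²). Equivalently, (cᵢ − α)(cⱼ + α) > cᵢ cⱼ. -/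
open Finset

/-- The Gaussian entropy measure H_G(c) = −Σ log(cₖ²) satisfies D1 (Robin Hood):
a Robin Hood operation strictly decreases it; equivalently (cᵢ−α)(cⱼ+α) > cᵢcⱼ. -/
theorem hg_robinHood (N : ℕ) (c : Fin N → ℝ) (hc : ∀ k, 0 < c k)
    (i j : Fin N) (hij : i ≠ j) (hgt : c j < c i)
    (α : ℝ) (hα0 : 0 < α) (hα : α < (c i - c j) / 2) :
    (-∑ k ∈ ({i, j}ᶜ : Finset (Fin N)), Real.log (c k ^ 2)
        - Real.log ((c i - α) ^ 2) - Real.log ((c j + α) ^ 2)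
      < -∑ k, Real.log (c k ^ 2)) ∧
    c i * c j < (c i - α) * (c j + α) := by
  have hi := hc i; have hj := hc j
  have h1 : 0 < c i - α := by linarith
  have h2 : 0 < c j + α := by linarith
  have hprod : c i * c j < (c i - α) * (c j + α) := by nlinarith
  refine ⟨?_, hprod⟩
  have hsum : ∑ k, Real.log (c k ^ 2)
      = ∑ k ∈ ({i, j}ᶜ : Finset (Fin N)), Real.log (c k ^ 2)
        + (Real.log (c i ^ 2) + Real.log (c j ^ 2)) := by
    rw [← Finset.sum_compl_add_sum ({i, j} : Finset (Fin N)), Finset.sum_pair hij]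
  rw [hsum]
  have hlog : Real.log (c i ^ 2) + Real.log (c j ^ 2)
      < Real.log ((c i - α) ^ 2) + Real.log ((c j + α) ^ 2) := by
    rw [← Real.log_mul (by positivity) (by positivity),
        ← Real.log_mul (by positivity) (by positivity)]
    apply Real.log_lt_log (by positivity)
    calc c i ^ 2 * c j ^ 2 = (c i * c j) ^ 2 := by ring
      _ < ((c i - α) * (c j + α)) ^ 2 := pow_lt_pow_left₀ hprod (le_of_lt (mul_pos hi hj)) two_ne_zero
      _ = (c i - α) ^ 2 * (c j + α) ^ 2 := by ring
  linarith
end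

section
/- The Hoyer measure satisfies D1 (Robin Hood): for every vector c = (c₁,…,c_N) of nonnegative reals with N ≥ 2 and Σ_k cₖ² > 0, all indices i ≠ j with cᵢ > cⱼ, and every α with 0 < α < (cᵢ − cⱼ)/2, Hoyer(c') < Hoyer(c), where c' is obtained from c by replacing cᵢ with cᵢ − α and cⱼ with cⱼ + α. -/
open Finset

/-- The Hoyer sparsity measure of a vector d of length N:
(√N − (Σ dₖ)/√(Σ dₖ²)) / (√N − 1). -/
noncomputable def hoyer {N : ℕ} (d : Fin N → ℝ) : ℝ :=
  (Real.sqrt N - (∑ k, d k) / Real.sqrt (∑ k, d k ^ 2)) / (Real.sqrt N - 1)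

lemma sum_update_aux {N : ℕ} (g : Fin N → ℝ) (t : Fin N) (v : ℝ) :
    ∑ k, Function.update g t v k = ∑ k, g k + (v - g t) := by
  rw [Finset.sum_update_of_mem (Finset.mem_univ t)]
  have := Finset.sum_eq_sum_sdiff_singleton_add (Finset.mem_univ t) g
  rw [this]; ring

lemma sq_update_aux {N : ℕ} (g : Fin N → ℝ) (t : Fin N) (v : ℝ) :
    (fun k => (Function.update g t v k) ^ 2) = Function.update (fun k => (g k) ^ 2) t (v ^ 2) :=
  funext fun k => Function.apply_update (fun _ x => x ^ 2) g t v k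

/-- The Hoyer measure satisfies D1 (Robin Hood): a Robin Hood operation strictly
decreases it. -/
theorem hoyer_robinHood (N : ℕ) (hN : 2 ≤ N) (c : Fin N → ℝ)
    (hc : ∀ k, 0 ≤ c k) (hsq : 0 < ∑ k, c k ^ 2)
    (i j : Fin N) (hij : i ≠ j) (hgt : c j < c i)
    (α : ℝ) (hα0 : 0 < α) (hα : α < (c i - c j) / 2) :
    hoyer (Function.update (Function.update c i (c i - α)) j (c j + α)) < hoyer c := by
  set d := Function.update (Function.update c i (c i - α)) j (c j + α) with hd
  have hSpos : 0 < ∑ k, c k := by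
    rcases (Finset.sum_nonneg fun k _ => hc k).lt_or_eq with h | h
    · exact h
    · exfalso
      have : ∀ k ∈ Finset.univ, c k = 0 :=
        (Finset.sum_eq_zero_iff_of_nonneg fun k _ => hc k).mp h.symm
      have : (∑ k, c k ^ 2) = 0 := Finset.sum_eq_zero fun k _ => by
        rw [this k (Finset.mem_univ k)]; ring
      linarith
  -- sums of d
  have hS : ∑ k, d k = ∑ k, c k := by
    rw [hd, sum_update_aux, sum_update_aux, Function.update_of_ne (Ne.symm hij)]
    ring
  have hQ : ∑ k, d k ^ 2 = ∑ k, c k ^ 2 - 2 * α * (c i - c j - α) := by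
    rw [hd, sq_update_aux, sum_update_aux, sq_update_aux, sum_update_aux]
    simp only [Function.update_of_ne (Ne.symm hij)]
    ring
  have hQlt : ∑ k, d k ^ 2 < ∑ k, c k ^ 2 := by
    rw [hQ]; nlinarith
  have hdj : d j = c j + α := by simp [hd]
  have hQ'pos : 0 < ∑ k, d k ^ 2 := by
    have h1 : d j ^ 2 ≤ ∑ k, d k ^ 2 :=
      Finset.single_le_sum (f := fun k => d k ^ 2) (fun k _ => sq_nonneg _) (Finset.mem_univ j)
    have : 0 < d j ^ 2 := by rw [hdj]; nlinarith [hc j]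
    linarith
  have hsN : (1:ℝ) < Real.sqrt N := by
    rw [show (1:ℝ) = Real.sqrt 1 by simp]
    apply Real.sqrt_lt_sqrt (by norm_num)
    exact_mod_cast lt_of_lt_of_le one_lt_two (by exact_mod_cast hN)
  have hsqrtlt : Real.sqrt (∑ k, d k ^ 2) < Real.sqrt (∑ k, c k ^ 2) :=
    Real.sqrt_lt_sqrt (le_of_lt hQ'pos) hQlt
  have hsqrt'pos : 0 < Real.sqrt (∑ k, d k ^ 2) := Real.sqrt_pos.mpr hQ'pos
  have hdiv : (∑ k, c k) / Real.sqrt (∑ k, c k ^ 2) <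
      (∑ k, c k) / Real.sqrt (∑ k, d k ^ 2) :=
    div_lt_div_of_pos_left hSpos hsqrt'pos hsqrtlt
  unfold hoyer
  rw [hS]
  apply div_lt_div_of_pos_right _ (by linarith)
  linarith
end

section
/- The Hoyer measure satisfies D3 (Rising Tide): for every vector c = (c₁,…,c_N) of nonnegative reals with N ≥ 2 whose entries are not all equal, and every α > 0, Hoyer(c + α) < Hoyer(c), where c + α denotes the vector with entries cₖ + α. The key fact is the strict Cauchy–Schwarz inequality (Σ_k cₖ)² < N Σ_k cₖ² when the entries are not all equal. -/
open Finset

lemma strict_cauchy (N : ℕ) (c : Fin N → ℝ) (hne : ∃ i j, c i ≠ c j) :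
    (∑ k, c k) ^ 2 < N * ∑ k, c k ^ 2 := by
  obtain ⟨i, j, hij⟩ := hne
  have h1 : ∑ i : Fin N, ∑ j : Fin N, (c i - c j) ^ 2
      = 2 * ((N : ℝ) * ∑ k, c k ^ 2 - (∑ k, c k) ^ 2) := by
    have hrow : ∀ i : Fin N, ∑ j : Fin N, (c i - c j) ^ 2
        = (N : ℝ) * c i ^ 2 - 2 * c i * (∑ k, c k) + ∑ k, c k ^ 2 := by
      intro i
      have : ∑ j : Fin N, (c i - c j) ^ 2
          = ∑ j : Fin N, (c i ^ 2 - 2 * c i * c j + c j ^ 2) :=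
        Finset.sum_congr rfl (by intros; ring)
      rw [this, Finset.sum_add_distrib, Finset.sum_sub_distrib, Finset.sum_const,
        ← Finset.mul_sum]
      simp [Finset.card_univ]
    rw [Finset.sum_congr rfl (fun i _ => hrow i), Finset.sum_add_distrib,
      Finset.sum_sub_distrib, Finset.sum_const, ← Finset.mul_sum]
    have : ∑ i : Fin N, 2 * c i * (∑ k, c k) = 2 * (∑ k, c k) ^ 2 := by
      rw [← Finset.sum_mul]
      have : ∑ i : Fin N, 2 * c i = 2 * ∑ k, c k := by
        rw [← Finset.mul_sum]
      rw [this]; ring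
    rw [this]
    simp [Finset.card_univ]
    ring
  have h2 : 0 < ∑ i : Fin N, ∑ j : Fin N, (c i - c j) ^ 2 := by
    apply Finset.sum_pos' (fun _ _ => Finset.sum_nonneg fun _ _ => sq_nonneg _)
    refine ⟨i, Finset.mem_univ i, ?_⟩
    apply Finset.sum_pos' (fun _ _ => sq_nonneg _)
    refine ⟨j, Finset.mem_univ j, ?_⟩
    have : c i - c j ≠ 0 := sub_ne_zero.mpr hij
    positivity
  linarith [h1 ▸ h2]

/-- The Hoyer measure satisfies D3 (Rising Tide): for a vector of nonnegative reals
(N ≥ 2) whose entries are not all equal, adding a constant α > 0 to every coefficient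
strictly decreases the Hoyer measure. -/
theorem hoyer_risingTide (N : ℕ) (hN : 2 ≤ N) (c : Fin N → ℝ)
    (hc : ∀ k, 0 ≤ c k) (hne : ∃ i j, c i ≠ c j)
    (α : ℝ) (hα : 0 < α) :
    hoyer (fun k => c k + α) < hoyer c := by
  have hN2 : (2:ℝ) ≤ (N:ℝ) := by exact_mod_cast hN
  have hNpos : (0:ℝ) < N := by linarith
  -- some entry is positive
  have hpos : ∃ k, 0 < c k := by
    obtain ⟨i, j, hij⟩ := hne
    rcases (hc i).lt_or_eq with h | h
    · exact ⟨i, h⟩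
    rcases (hc j).lt_or_eq with h' | h'
    · exact ⟨j, h'⟩
    exact absurd (h.symm.trans h') hij
  obtain ⟨k0, hk0⟩ := hpos
  have hS : 0 < ∑ k, c k :=
    Finset.sum_pos' (fun k _ => hc k) ⟨k0, Finset.mem_univ k0, hk0⟩
  have hQ : 0 < ∑ k, c k ^ 2 :=
    Finset.sum_pos' (fun k _ => sq_nonneg _) ⟨k0, Finset.mem_univ k0, by positivity⟩
  set S := ∑ k, c k with hSdef
  set Q := ∑ k, c k ^ 2 with hQdef
  have hCS : S ^ 2 < N * Q := strict_cauchy N c hne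
  -- sums for the shifted vector
  have hS' : ∑ k, (c k + α) = S + N * α := by
    rw [Finset.sum_add_distrib, Finset.sum_const]
    simp [Finset.card_univ, hSdef]
  have hQ' : ∑ k, (c k + α) ^ 2 = Q + 2 * α * S + N * α ^ 2 := by
    have : ∑ k : Fin N, (c k + α) ^ 2 = ∑ k : Fin N, (c k ^ 2 + 2 * α * c k + α ^ 2) :=
      Finset.sum_congr rfl (by intros; ring)
    rw [this, Finset.sum_add_distrib, Finset.sum_add_distrib, Finset.sum_const,
      ← Finset.mul_sum]
    simp [Finset.card_univ, hSdef, hQdef]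
  have hQ'pos : 0 < Q + 2 * α * S + N * α ^ 2 := by positivity
  -- key polynomial inequality
  have hkey : S ^ 2 * (Q + 2 * α * S + N * α ^ 2) < (S + N * α) ^ 2 * Q := by
    have hd : 0 < N * Q - S ^ 2 := by linarith
    nlinarith [mul_pos (mul_pos hα hS) hd, mul_pos (mul_pos hNpos (mul_pos hα hα)) hd]
  -- ratio increases
  have hratio : S / Real.sqrt Q < (S + N * α) / Real.sqrt (Q + 2 * α * S + N * α ^ 2) := by
    rw [div_lt_div_iff₀ (Real.sqrt_pos.mpr hQ) (Real.sqrt_pos.mpr hQ'pos)]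
    have hS'pos : 0 < S + N * α := by positivity
    have e1 : S * Real.sqrt (Q + 2 * α * S + N * α ^ 2)
        = Real.sqrt (S ^ 2 * (Q + 2 * α * S + N * α ^ 2)) := by
      rw [Real.sqrt_mul (sq_nonneg S), Real.sqrt_sq hS.le]
    have e2 : (S + N * α) * Real.sqrt Q = Real.sqrt ((S + N * α) ^ 2 * Q) := by
      rw [Real.sqrt_mul (sq_nonneg _), Real.sqrt_sq hS'pos.le]
    rw [e1, e2]
    exact Real.sqrt_lt_sqrt (by positivity) hkey
  have hsq : 1 < Real.sqrt N := by
    have := Real.sqrt_lt_sqrt (by norm_num) (show (1:ℝ) < N by linarith)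
    simpa using this
  unfold hoyer
  rw [hS', hQ']
  have hden : 0 < Real.sqrt N - 1 := by linarith
  gcongr
end

section
/- The Gini Index satisfies D1 (Robin Hood): for every vector c = (c₁,…,c_N) of nonnegative reals with Σ_k cₖ > 0, all indices i ≠ j with cᵢ > cⱼ, and every α with 0 < α < (cᵢ − cⱼ)/2, G(c') < G(c), where c' is obtained from c by replacing cᵢ with cᵢ − α and cⱼ with cⱼ + α. -/
open Finset

section GiniAux

/-- Summing `f` of the entries of a list (via `getD`) equals the sum of the mapped list. -/
private theorem sumGetD (l : List ℝ) (f : ℝ → ℝ) :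
    ∑ k ∈ Finset.range l.length, f (l.getD k 0) = (l.map f).sum := by
  induction l with
  | nil => simp
  | cons x t ih =>
    rw [List.length_cons, Finset.sum_range_succ']
    simp only [List.getD_cons_succ, List.getD_cons_zero, ih, List.map_cons, List.sum_cons]
    ring

/-- Counting: the double sum of `g (max a b)` over a square. -/
private theorem countMax (N : ℕ) (g : ℕ → ℝ) :
    ∑ a ∈ Finset.range N, ∑ b ∈ Finset.range N, g (max a b)
      = ∑ k ∈ Finset.range N, (2*(k:ℝ)+1) * g k := by
  induction N with
  | zero => simp
  | succ n ih =>
    rw [Finset.sum_range_succ]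
    have h1 : ∀ a ∈ Finset.range n, ∑ b ∈ Finset.range (n+1), g (max a b)
        = (∑ b ∈ Finset.range n, g (max a b)) + g n := by
      intro a ha
      rw [Finset.sum_range_succ]
      congr 1
      rw [max_eq_right (le_of_lt (Finset.mem_range.mp ha))]
    rw [Finset.sum_congr rfl h1, Finset.sum_add_distrib]
    have h2 : ∑ b ∈ Finset.range (n+1), g (max n b) = (∑ b ∈ Finset.range n, g n) + g n := by
      rw [Finset.sum_range_succ, max_self]
      congr 1
      exact Finset.sum_congr rfl fun b hb => by
        rw [max_eq_left (le_of_lt (Finset.mem_range.mp hb))]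
    rw [ih, h2, Finset.sum_range_succ]
    simp [Finset.sum_const, Finset.card_range]
    ring

/-- For a sorted list, `max` of entries is the entry at the `max` index. -/
private theorem sortedMax (s : List ℝ) (hs : List.Pairwise (·≤·) s) (a b : ℕ)
    (ha : a < s.length) (hb : b < s.length) :
    max (s.getD a 0) (s.getD b 0) = s.getD (max a b) 0 := by
  have mono : ∀ u v : ℕ, ∀ hu : u < s.length, ∀ hv : v < s.length, u ≤ v →
      s.getD u 0 ≤ s.getD v 0 := by
    intro u v hu hv huv
    rw [List.getD_eq_getElem _ _ hu, List.getD_eq_getElem _ _ hv]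
    rcases eq_or_lt_of_le huv with h | h
    · subst h; rfl
    · exact List.Pairwise.rel_get_of_lt hs (by simpa using h)
  rcases le_total a b with h | h
  · rw [max_eq_right h, max_eq_right (mono a b ha hb h)]
  · rw [max_eq_left h, max_eq_left (mono b a hb ha h)]

/-- The pairwise-max double sum of a list. -/
private noncomputable def DD (l : List ℝ) : ℝ :=
  ∑ a ∈ Finset.range l.length, ∑ b ∈ Finset.range l.length, max (l.getD a 0) (l.getD b 0)

/-- `DD` only depends on the underlying multiset. -/
private theorem DD_eq_Dm (l : List ℝ) : DD l = (((l : Multiset ℝ)).map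
    (fun x => (((l : Multiset ℝ)).map (fun y => max x y)).sum)).sum := by
  unfold DD
  calc ∑ a ∈ Finset.range l.length, ∑ b ∈ Finset.range l.length, max (l.getD a 0) (l.getD b 0)
      = ∑ a ∈ Finset.range l.length,
          (fun x => (l.map (fun y => max x y)).sum) (l.getD a 0) :=
        Finset.sum_congr rfl fun a _ => sumGetD l (fun y => max (l.getD a 0) y)
    _ = (l.map (fun x => (l.map (fun y => max x y)).sum)).sum :=
        sumGetD l (fun x => (l.map (fun y => max x y)).sum)
    _ = _ := by simp [Multiset.map_coe, Multiset.sum_coe]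

end GiniAux

/-- The Gini Index of a list of nonnegative reals: sort the entries ascendingly as
c₍₁₎ ≤ ⋯ ≤ c₍N₎ and set G(c) = 1 − 2 Σ_{k=1}^N (c₍ₖ₎/‖c‖₁)·((N − k + 1/2)/N).
Below the sum runs over 0-indexed k, so the weight is ((N − k − 1/2)/N). -/
noncomputable def gini (l : List ℝ) : ℝ :=
  1 - 2 * ∑ k ∈ Finset.range l.length,
      ((Multiset.sort (l : Multiset ℝ) (· ≤ ·)).getD k 0 / l.sum) *
        (((l.length : ℝ) - k - 1 / 2) / l.length)

section GiniAux2

/-- Closed form for the Gini index in terms of the pairwise-max double sum. -/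
private theorem gini_eq (l : List ℝ) (hS : 0 < l.sum) :
    gini l = DD l / (l.sum * l.length) - 1 := by
  set s : List ℝ := Multiset.sort (l : Multiset ℝ) (· ≤ ·) with hs_def
  have hcoe : (s : Multiset ℝ) = (l : Multiset ℝ) := Multiset.sort_eq _ _
  have hsN : s.length = l.length := by
    have := congrArg Multiset.card hcoe; simpa using this
  have hsS : s.sum = l.sum := by
    have := congrArg Multiset.sum hcoe; simpa using this
  have hsort : List.Pairwise (·≤·) s := Multiset.pairwise_sort _ _
  have hN : 0 < l.length := by
    rcases Nat.eq_zero_or_pos l.length with h | h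
    · exfalso; rw [List.length_eq_zero_iff] at h; rw [h] at hS; simp at hS
    · exact h
  set N := l.length with hN_def
  set S := l.sum with hS_def
  have hNR : (0:ℝ) < (N:ℝ) := by exact_mod_cast hN
  have hDD : DD l = DD s := by rw [DD_eq_Dm, DD_eq_Dm, hcoe]
  have hDDs : DD s = ∑ k ∈ Finset.range N, (2*(k:ℝ)+1) * s.getD k 0 := by
    rw [DD, hsN, ← countMax N (fun k => s.getD k 0)]
    refine Finset.sum_congr rfl fun a ha => Finset.sum_congr rfl fun b hb => ?_
    exact sortedMax s hsort a b (by rw [hsN]; exact Finset.mem_range.mp ha)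
      (by rw [hsN]; exact Finset.mem_range.mp hb)
  have hsum' : ∑ k ∈ Finset.range N, s.getD k 0 = S := by
    have := sumGetD s id
    rw [hsN, List.map_id] at this
    exact this.trans hsS
  have key : (∑ k ∈ Finset.range N, (2*(k:ℝ)+1) * s.getD k 0)
      + 2 * (∑ k ∈ Finset.range N, s.getD k 0 * ((N:ℝ) - k - 1/2))
      = 2 * N * S := by
    rw [Finset.mul_sum, ← Finset.sum_add_distrib]
    have : ∀ k ∈ Finset.range N, (2*(k:ℝ)+1) * s.getD k 0
        + 2 * (s.getD k 0 * ((N:ℝ) - k - 1/2)) = 2 * (N:ℝ) * s.getD k 0 := by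
      intro k _; ring
    rw [Finset.sum_congr rfl this, ← Finset.mul_sum, hsum']
  have hgsum : ∑ k ∈ Finset.range N, (s.getD k 0 / S) * (((N:ℝ) - k - 1/2) / N)
      = (∑ k ∈ Finset.range N, s.getD k 0 * ((N:ℝ) - k - 1/2)) / (S * N) := by
    rw [Finset.sum_div]
    exact Finset.sum_congr rfl fun k _ => by rw [div_mul_div_comm]
  rw [gini, hDD, hDDs]
  rw [show (Multiset.sort (l : Multiset ℝ) (· ≤ ·)) = s from rfl]
  rw [← hN_def, ← hS_def, hgsum]
  have hS0 : S ≠ 0 := ne_of_gt hS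
  have hN0 : (N:ℝ) ≠ 0 := ne_of_gt hNR
  have hX : ∑ k ∈ Finset.range N, (2*(k:ℝ)+1) * s.getD k 0
      = 2 * N * S - 2 * (∑ k ∈ Finset.range N, s.getD k 0 * ((N:ℝ) - k - 1/2)) := by
    linarith [key]
  rw [hX]
  field_simp
  ring

/-- The basic two-point max inequality behind the Robin Hood principle. -/
private theorem pairIneq (A B b α : ℝ) (hα : 0 ≤ α) (h2 : B + α ≤ A - α) :
    max (A-α) b + max (B+α) b ≤ max A b + max B b := by
  rcases max_cases (A-α) b with ⟨e1,h1⟩|⟨e1,h1⟩ <;>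
  rcases max_cases (B+α) b with ⟨e2,h2'⟩|⟨e2,h2'⟩ <;>
  rcases max_cases A b with ⟨e3,h3⟩|⟨e3,h3⟩ <;>
  rcases max_cases B b with ⟨e4,h4⟩|⟨e4,h4⟩ <;> rw [e1,e2,e3,e4] <;> linarith

/-- Splitting a range sum at two distinct points. -/
private theorem split2 (N i j : ℕ) (hi : i < N) (hj : j < N) (hij : i ≠ j) (f : ℕ → ℝ) :
    ∑ k ∈ Finset.range N, f k
      = (∑ k ∈ ((Finset.range N).erase i).erase j, f k) + f i + f j := by
  have hjmem : j ∈ (Finset.range N).erase i :=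
    Finset.mem_erase.mpr ⟨Ne.symm hij, Finset.mem_range.mpr hj⟩
  rw [← Finset.sum_erase_add _ _ (Finset.mem_range.mpr hi),
      ← Finset.sum_erase_add _ _ hjmem]
  ring

/-- Core estimate: a Robin Hood operation decreases the pairwise-max double sum
by at least `2α`. Stated abstractly for two functions `d`, `d'`. -/
private theorem core (N iN jN : ℕ) (d d' : ℕ → ℝ) (hi : iN < N) (hj : jN < N) (hij : iN ≠ jN)
    (α : ℝ) (hα0 : 0 < α) (hord : d jN + α ≤ d iN - α)
    (h'i : d' iN = d iN - α) (h'j : d' jN = d jN + α)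
    (h'other : ∀ k, k ≠ iN → k ≠ jN → d' k = d k) :
    ∑ a ∈ Finset.range N, ∑ b ∈ Finset.range N, max (d' a) (d' b) + 2*α
      ≤ ∑ a ∈ Finset.range N, ∑ b ∈ Finset.range N, max (d a) (d b) := by
  set A' : Finset ℕ := ((Finset.range N).erase iN).erase jN with hA'
  have hmem : ∀ a ∈ A', a ≠ iN ∧ a ≠ jN := by
    intro a ha
    rw [hA', Finset.mem_erase, Finset.mem_erase] at ha
    exact ⟨ha.2.1, ha.1⟩
  have hα0' : (0:ℝ) ≤ α := le_of_lt hα0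
  set t : ℕ → ℕ → ℝ := fun a b => max (d a) (d b) - max (d' a) (d' b) with ht
  have hcomm : ∀ a b, t a b = t b a := by
    intro a b; simp only [ht]; rw [max_comm (d a) (d b), max_comm (d' a) (d' b)]
  have hBA : d jN ≤ d iN := by linarith
  have htii : t iN iN = α := by simp [ht, h'i]
  have htjj : t jN jN = -α := by simp [ht, h'j]
  have htij : t iN jN = α := by
    simp only [ht, h'i, h'j]
    rw [max_eq_left hBA, max_eq_left (by linarith : d jN + α ≤ d iN - α)]
    ring
  have htji : t jN iN = α := by rw [hcomm]; exact htij
  have htzero : ∀ a ∈ A', ∀ b ∈ A', t a b = 0 := by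
    intro a ha b hb
    obtain ⟨ha1, ha2⟩ := hmem a ha
    obtain ⟨hb1, hb2⟩ := hmem b hb
    simp [ht, h'other a ha1 ha2, h'other b hb1 hb2]
  have hpair : ∀ b, b ≠ iN → b ≠ jN → 0 ≤ t iN b + t jN b := by
    intro b hb1 hb2
    have := pairIneq (d iN) (d jN) (d b) α hα0' hord
    simp only [ht, h'i, h'j, h'other b hb1 hb2]
    linarith
  have hts : ∑ a ∈ Finset.range N, ∑ b ∈ Finset.range N, t a b
      = (∑ a ∈ Finset.range N, ∑ b ∈ Finset.range N, max (d a) (d b))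
        - ∑ a ∈ Finset.range N, ∑ b ∈ Finset.range N, max (d' a) (d' b) := by
    rw [← Finset.sum_sub_distrib]
    refine Finset.sum_congr rfl fun a _ => ?_
    rw [← Finset.sum_sub_distrib]
  suffices h : 2*α ≤ ∑ a ∈ Finset.range N, ∑ b ∈ Finset.range N, t a b by linarith
  rw [split2 N iN jN hi hj hij (fun a => ∑ b ∈ Finset.range N, t a b)]
  have houter : ∀ a ∈ A', ∑ b ∈ Finset.range N, t a b = t a iN + t a jN := by
    intro a ha
    rw [split2 N iN jN hi hj hij (t a), Finset.sum_eq_zero (fun b hb => htzero a ha b hb)]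
    ring
  rw [Finset.sum_congr rfl houter]
  have h1 : 0 ≤ ∑ a ∈ A', (t a iN + t a jN) := by
    refine Finset.sum_nonneg fun a ha => ?_
    obtain ⟨ha1, ha2⟩ := hmem a ha
    rw [hcomm a iN, hcomm a jN]
    exact hpair a ha1 ha2
  have h2 : ∑ b ∈ Finset.range N, t iN b = (∑ b ∈ A', t iN b) + t iN iN + t iN jN :=
    split2 N iN jN hi hj hij (t iN)
  have h3 : ∑ b ∈ Finset.range N, t jN b = (∑ b ∈ A', t jN b) + t jN iN + t jN jN :=
    split2 N iN jN hi hj hij (t jN)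
  have h4 : 0 ≤ (∑ b ∈ A', t iN b) + (∑ b ∈ A', t jN b) := by
    rw [← Finset.sum_add_distrib]
    exact Finset.sum_nonneg fun b hb => hpair b (hmem b hb).1 (hmem b hb).2
  rw [h2, h3, htii, htjj, htij, htji]
  linarith

end GiniAux2

/-- The Gini Index satisfies D1 (Robin Hood): a Robin Hood operation strictly
decreases it. -/
theorem gini_robinHood (c : List ℝ) (hc : ∀ x ∈ c, 0 ≤ x) (hsum : 0 < c.sum)
    (i j : Fin c.length) (hij : i ≠ j) (hgt : c.get j < c.get i)
    (α : ℝ) (hα0 : 0 < α) (hα : α < (c.get i - c.get j) / 2) :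
    gini ((c.set i (c.get i - α)).set j (c.get j + α)) < gini c := by
  set c' : List ℝ := (c.set i (c.get i - α)).set j (c.get j + α) with hc'
  have hiN : (i:ℕ) < c.length := i.isLt
  have hjN : (j:ℕ) < c.length := j.isLt
  have hijN : (i:ℕ) ≠ (j:ℕ) := fun h => hij (Fin.ext h)
  have hlen : c'.length = c.length := by simp [hc']
  have hord : c.get j + α ≤ c.get i - α := by linarith
  -- entrywise description of c'
  have hget : ∀ k, k < c.length → c'.getD k 0 =
      if (j:ℕ) = k then c.get j + α else if (i:ℕ) = k then c.get i - α
        else c.getD k 0 := by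
    intro k hk
    rw [hc']
    have hk2 : k < ((c.set (i:ℕ) (c.get i - α)).set (j:ℕ) (c.get j + α)).length := by
      simpa using hk
    rw [List.getD_eq_getElem _ _ hk2]
    simp only [List.getElem_set]
    rw [List.getD_eq_getElem _ _ hk]
  have hgeti : c.getD (i:ℕ) 0 = c.get i := by
    rw [List.getD_eq_getElem _ _ hiN]; simp [List.get_eq_getElem]
  have hgetj : c.getD (j:ℕ) 0 = c.get j := by
    rw [List.getD_eq_getElem _ _ hjN]; simp [List.get_eq_getElem]
  have hget'i : c'.getD (i:ℕ) 0 = c.getD (i:ℕ) 0 - α := by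
    rw [hget _ hiN, if_neg (Ne.symm hijN), if_pos rfl, hgeti]
  have hget'j : c'.getD (j:ℕ) 0 = c.getD (j:ℕ) 0 + α := by
    rw [hget _ hjN, if_pos rfl, hgetj]
  have hget'o : ∀ k, k ≠ (i:ℕ) → k ≠ (j:ℕ) → c'.getD k 0 = c.getD k 0 := by
    intro k hki hkj
    by_cases hk : k < c.length
    · rw [hget k hk, if_neg (fun h => hkj h.symm), if_neg (fun h => hki h.symm)]
    · push_neg at hk
      rw [List.getD_eq_default _ _ (by rw [hlen]; exact hk), List.getD_eq_default _ _ hk]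
  -- same sum
  have hsum' : c'.sum = c.sum := by
    have e1 : ∑ k ∈ Finset.range c.length, c'.getD k 0 = c'.sum := by
      have := sumGetD c' id
      rw [hlen, List.map_id] at this
      exact this
    have e2 : ∑ k ∈ Finset.range c.length, c.getD k 0 = c.sum := by
      have := sumGetD c id
      rw [List.map_id] at this
      exact this
    rw [← e1, ← e2, split2 c.length i j hiN hjN hijN (fun k => c'.getD k 0),
        split2 c.length i j hiN hjN hijN (fun k => c.getD k 0)]
    have : ∀ k ∈ ((Finset.range c.length).erase (i:ℕ)).erase (j:ℕ),
        c'.getD k 0 = c.getD k 0 := by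
      intro k hk
      rw [Finset.mem_erase, Finset.mem_erase] at hk
      exact hget'o k hk.2.1 hk.1
    rw [Finset.sum_congr rfl this, hget'i, hget'j]
    ring
  have hsump : 0 < c'.sum := by rw [hsum']; exact hsum
  -- DD decreases
  have hDD : DD c' + 2*α ≤ DD c := by
    have e1 : DD c' = ∑ a ∈ Finset.range c.length, ∑ b ∈ Finset.range c.length,
        max (c'.getD a 0) (c'.getD b 0) := by rw [DD, hlen]
    rw [e1, DD]
    exact core c.length i j (fun k => c.getD k 0) (fun k => c'.getD k 0) hiN hjN hijN
      α hα0 (by beta_reduce; rw [hgeti, hgetj]; exact hord) hget'i hget'j hget'o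
  have hNpos : (0:ℝ) < (c.length:ℝ) := by
    have : 0 < c.length := i.pos
    exact_mod_cast this
  have hden : (0:ℝ) < c.sum * c.length := mul_pos hsum hNpos
  rw [gini_eq c hsum, gini_eq c' hsump, hsum', hlen]
  have : DD c' < DD c := by linarith
  have h5 : DD c' / (c.sum * (c.length:ℝ)) < DD c / (c.sum * (c.length:ℝ)) :=
    div_lt_div_of_pos_right this hden
  linarith
end

section
/- The Gini Index satisfies D3 (Rising Tide): for every vector c = (c₁,…,c_N) of nonnegative reals with N ≥ 2 whose entries are not all equal, and every α > 0, G(c + α) < G(c), where c + α denotes the vector with entries cₖ + α. -/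
open Finset

private lemma list_sum_getD (l : List ℝ) :
    l.sum = ∑ i ∈ Finset.range l.length, l.getD i 0 := by
  induction l with
  | nil => simp
  | cons a t ih => simp [Finset.sum_range_succ', ih, add_comm]

private lemma map_add_sum (α : ℝ) (l : List ℝ) :
    (l.map (fun x => x + α)).sum = l.sum + l.length * α := by
  induction l with
  | nil => simp
  | cons a t ih => simp [ih]; ring

private lemma sort_map_add (α : ℝ) (c : List ℝ) :
    Multiset.sort ((c.map (fun x => x + α) : List ℝ) : Multiset ℝ) (· ≤ ·)
      = (Multiset.sort (c : Multiset ℝ) (· ≤ ·)).map (fun x => x + α) := by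
  apply (fun hp h1 h2 => List.Perm.eq_of_pairwise' (r := ((· ≤ ·) : ℝ → ℝ → Prop)) h1 h2 hp)
  · rw [← Multiset.coe_eq_coe, Multiset.sort_eq, ← Multiset.map_coe, ← Multiset.map_coe, Multiset.sort_eq]
  · exact Multiset.pairwise_sort _ _
  · exact List.Pairwise.map _ (fun a b h => by simpa using add_le_add_right h α)
      (Multiset.pairwise_sort _ _)


/-- The Gini Index satisfies D3 (Rising Tide): for a vector of nonnegative reals
(N ≥ 2) whose entries are not all equal, adding a constant α > 0 to every coefficient
strictly decreases the Gini Index. -/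
theorem gini_risingTide (c : List ℝ) (hc : ∀ x ∈ c, 0 ≤ x) (hlen : 2 ≤ c.length)
    (hne : ∃ x ∈ c, ∃ y ∈ c, x ≠ y)
    (α : ℝ) (hα : 0 < α) :
    gini (c.map (fun x => x + α)) < gini c := by
  obtain ⟨x, hx, y, hy, hxy⟩ := hne
  set N := c.length with hNdef
  set s := Multiset.sort (c : Multiset ℝ) (· ≤ ·) with hsdef
  have hslen : s.length = N := by simp [hsdef, hNdef]
  set f : ℕ → ℝ := fun k => s.getD k 0 with hfdef
  have hNpos : (0:ℝ) < N := by
    have : (2:ℝ) ≤ N := by exact_mod_cast hlen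
    linarith
  have hN0 : (N:ℝ) ≠ 0 := ne_of_gt hNpos
  -- monotonicity of f on range N
  have hmono : ∀ i j, i ≤ j → j < N → f i ≤ f j := by
    intro i j hij hj
    have hi' : i < s.length := by omega
    have hj' : j < s.length := by omega
    show s.getD i 0 ≤ s.getD j 0
    rw [List.getD_eq_getElem _ _ hi', List.getD_eq_getElem _ _ hj']
    have := List.Pairwise.rel_get_of_le (Multiset.pairwise_sort (c : Multiset ℝ) (· ≤ ·))
      (a := ⟨i, by rwa [← hsdef]⟩) (b := ⟨j, by rwa [← hsdef]⟩) hij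
    simpa [-Multiset.coe_sort] using this
  -- positivity of the sum
  have hS : 0 < c.sum := by
    have hz : ∃ z ∈ c, 0 < z := by
      rcases (hc x hx).lt_or_eq with h | h
      · exact ⟨x, hx, h⟩
      · refine ⟨y, hy, ?_⟩
        rcases (hc y hy).lt_or_eq with h' | h'
        · exact h'
        · exact absurd (h.symm.trans h') hxy
    obtain ⟨z, hzc, hz0⟩ := hz
    exact lt_of_lt_of_le hz0 (List.single_le_sum hc z hzc)
  -- sum of sorted values
  have hsum_s : ∑ k ∈ range N, f k = c.sum := by
    have h1 := list_sum_getD s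
    rw [hslen] at h1
    have h2 : s.sum = c.sum := by
      have : ((s : Multiset ℝ)).sum = ((c : Multiset ℝ)).sum := by
        rw [hsdef, Multiset.sort_eq]
      simpa using this
    rw [← h1, h2]
  -- f 0 < f (N-1)
  have hkey0 : f 0 < f (N - 1) := by
    have hxs : x ∈ s := by rw [hsdef, Multiset.mem_sort]; exact_mod_cast hx
    have hys : y ∈ s := by rw [hsdef, Multiset.mem_sort]; exact_mod_cast hy
    obtain ⟨i, hi, hix⟩ := List.mem_iff_getElem.mp hxs
    obtain ⟨j, hj, hjy⟩ := List.mem_iff_getElem.mp hys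
    have hfi : f i = x := by
      show s.getD i 0 = x; rw [List.getD_eq_getElem _ _ hi, hix]
    have hfj : f j = y := by
      show s.getD j 0 = y; rw [List.getD_eq_getElem _ _ hj, hjy]
    have hiN : i < N := by omega
    have hjN : j < N := by omega
    rcases lt_or_gt_of_ne hxy with h | h
    · calc f 0 ≤ f i := hmono 0 i (Nat.zero_le _) hiN
        _ < f j := by rw [hfi, hfj]; exact h
        _ ≤ f (N-1) := hmono j (N-1) (by omega) (by omega)
    · calc f 0 ≤ f j := hmono 0 j (Nat.zero_le _) hjN
        _ < f i := by rw [hfi, hfj]; exact h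
        _ ≤ f (N-1) := hmono i (N-1) (by omega) (by omega)
  -- key sum inequality
  have hkey : ∑ k ∈ range N, f k * ((N:ℝ) - 1 - 2*k) < 0 := by
    have hrefl := Finset.sum_range_reflect (fun k => f k * ((N:ℝ) - 1 - 2*k)) N
    have h2 : (2:ℝ) * ∑ k ∈ range N, f k * ((N:ℝ) - 1 - 2*k)
        = ∑ k ∈ range N, (f k - f (N-1-k)) * ((N:ℝ) - 1 - 2*k) := by
      rw [two_mul]
      nth_rewrite 1 [← hrefl]
      rw [← Finset.sum_add_distrib]
      apply Finset.sum_congr rfl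
      intro k hk
      have hk' : k < N := Finset.mem_range.mp hk
      have hcast : ((N - 1 - k : ℕ) : ℝ) = (N:ℝ) - 1 - k := by
        have h1 : 1 ≤ N := by omega
        have h2 : k ≤ N - 1 := by omega
        rw [Nat.cast_sub h2, Nat.cast_sub h1]
        norm_num
      rw [hcast]
      ring
    have hlt : ∑ k ∈ range N, (f k - f (N-1-k)) * ((N:ℝ) - 1 - 2*k)
        < ∑ k ∈ range N, (0:ℝ) := by
      apply Finset.sum_lt_sum
      · intro k hk
        have hk' : k < N := Finset.mem_range.mp hk
        rcases le_or_gt (2*k+1) N with h | h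
        · have h1 : f k ≤ f (N-1-k) := hmono k (N-1-k) (by omega) (by omega)
          have h2 : (0:ℝ) ≤ (N:ℝ) - 1 - 2*k := by
            have : ((2*k+1 : ℕ):ℝ) ≤ (N:ℝ) := by exact_mod_cast h
            push_cast at this; linarith
          nlinarith
        · have h1 : f (N-1-k) ≤ f k := hmono (N-1-k) k (by omega) hk'
          have h2 : (N:ℝ) - 1 - 2*k ≤ 0 := by
            have : (N:ℝ) < ((2*k+1 : ℕ):ℝ) := by exact_mod_cast h
            push_cast at this; linarith
          nlinarith
      · refine ⟨0, Finset.mem_range.mpr (by omega), ?_⟩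
        have h1 : f 0 - f (N-1-0) < 0 := by
          have : N - 1 - 0 = N - 1 := by omega
          rw [this]; linarith [hkey0]
        have h2 : (0:ℝ) < (N:ℝ) - 1 - 2*(0:ℕ) := by
          have hh : (2:ℝ) ≤ (N:ℝ) := by exact_mod_cast hlen
          push_cast
          linarith
        nlinarith
    rw [Finset.sum_const, smul_zero] at hlt
    linarith
  -- Gauss sum
  have hgauss : ∑ k ∈ range N, (k:ℝ) = (N:ℝ)*((N:ℝ)-1)/2 := by
    have h1 : 1 ≤ N := by omega
    have h := congrArg (Nat.cast : ℕ → ℝ) (Finset.sum_range_id_mul_two N)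
    push_cast [Nat.cast_sub h1] at h
    linarith
  have hw : ∑ k ∈ range N, (((N:ℝ) - k - 1/2)/N) = (N:ℝ)/2 := by
    rw [← Finset.sum_div]
    have h1 : ∑ k ∈ range N, ((N:ℝ) - k - 1/2) = (N:ℝ)*(N:ℝ)/2 := by
      rw [Finset.sum_sub_distrib, Finset.sum_sub_distrib, Finset.sum_const,
        Finset.card_range, hgauss, nsmul_eq_mul, Finset.sum_const, Finset.card_range,
        nsmul_eq_mul]
      ring
    rw [h1]
    field_simp
  -- T < S/2
  have hT : ∑ k ∈ range N, f k * (((N:ℝ) - k - 1/2)/N) < c.sum / 2 := by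
    have hexp : ∑ k ∈ range N, f k * (((N:ℝ) - k - 1/2)/N)
        = (∑ k ∈ range N, f k * ((N:ℝ) - 1 - 2*k) + (N:ℝ) * ∑ k ∈ range N, f k) / (2*N) := by
      rw [Finset.mul_sum, ← Finset.sum_add_distrib, Finset.sum_div]
      apply Finset.sum_congr rfl
      intro k _
      field_simp
      ring
    rw [hexp, hsum_s, div_lt_iff₀ (by positivity : (0:ℝ) < 2*(N:ℝ))]
    nlinarith [hkey]
  -- rewrite gini c
  have hgc : gini c = 1 - 2 * ((∑ k ∈ range N, f k * (((N:ℝ) - k - 1/2)/N)) / c.sum) := by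
    rw [gini, ← hNdef, ← hsdef]
    congr 2
    rw [Finset.sum_div]
    apply Finset.sum_congr rfl
    intro k _
    simp only [hfdef]
    ring
  -- rewrite gini (c + α)
  have hgm : gini (c.map (fun x => x + α))
      = 1 - 2 * ((∑ k ∈ range N, (f k + α) * (((N:ℝ) - k - 1/2)/N)) / (c.sum + N*α)) := by
    rw [gini, sort_map_add, List.length_map, map_add_sum, ← hNdef, ← hsdef]
    congr 2
    rw [Finset.sum_div]
    apply Finset.sum_congr rfl
    intro k hk
    have hk' : k < N := Finset.mem_range.mp hk
    have hget : (s.map (fun x => x + α)).getD k 0 = f k + α := by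
      rw [List.getD_eq_getElem _ _ (by rw [List.length_map]; omega), List.getElem_map]
      simp only [hfdef]
      rw [List.getD_eq_getElem _ _ (by omega)]
    rw [hget]
    ring
  rw [hgc, hgm]
  have hS' : (0:ℝ) < c.sum + N*α := by nlinarith [mul_pos hNpos hα]
  have hsplit : ∑ k ∈ range N, (f k + α) * (((N:ℝ) - k - 1/2)/N)
      = (∑ k ∈ range N, f k * (((N:ℝ) - k - 1/2)/N)) + α * ((N:ℝ)/2) := by
    rw [← hw, Finset.mul_sum, ← Finset.sum_add_distrib]
    apply Finset.sum_congr rfl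
    intro k _
    ring
  rw [hsplit]
  set T := ∑ k ∈ range N, f k * (((N:ℝ) - k - 1/2)/N) with hTdef
  have key : T / c.sum < (T + α * ((N:ℝ)/2)) / (c.sum + N*α) := by
    rw [div_lt_div_iff₀ hS hS']
    nlinarith [mul_pos (mul_pos hNpos hα) (sub_pos.mpr hT)]
  linarith [key]
end

section
/- The Gini Index satisfies D4 (Cloning): for every vector c = (c₁,…,c_N) of nonnegative reals with Σ_k cₖ > 0 and every integer m ≥ 1, G(c‖c‖⋯‖c) = G(c), where c‖c‖⋯‖c denotes the concatenation of m copies of c (a vector of length mN). -/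
open Finset

lemma sum_flatten_replicate (m : ℕ) (c : List ℝ) :
    (List.flatten (List.replicate m c)).sum = m * c.sum := by
  induction m with
  | zero => simp
  | succ n ih =>
      rw [List.replicate_succ, List.flatten_cons, List.sum_append, ih]
      push_cast
      ring

lemma sum_range_mul_eq (F : ℕ → ℝ) (m N : ℕ) :
    ∑ j ∈ Finset.range (m * N), F j
      = ∑ k ∈ Finset.range N, ∑ r ∈ Finset.range m, F (m * k + r) := by
  induction N with
  | zero => simp
  | succ n ih =>
      rw [Nat.mul_succ, Finset.sum_range_add, ih, Finset.sum_range_succ]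

lemma coe_flatten_replicate (m : ℕ) (c : List ℝ) :
    ((List.flatten (List.replicate m c) : List ℝ) : Multiset ℝ) = m • (c : Multiset ℝ) := by
  induction m with
  | zero => simp
  | succ n ih =>
      rw [List.replicate_succ, List.flatten_cons, ← Multiset.coe_add, ih, succ_nsmul, add_comm]

lemma coe_flatMap_replicate (m : ℕ) (s : List ℝ) :
    ((s.flatMap fun a => List.replicate m a : List ℝ) : Multiset ℝ) = m • (s : Multiset ℝ) := by
  induction s with
  | nil => simp
  | cons a t ih =>
      rw [List.flatMap_cons, ← Multiset.coe_add, ih, ← Multiset.cons_coe,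
        show (a ::ₘ (t : Multiset ℝ)) = {a} + (t : Multiset ℝ) from
          (Multiset.singleton_add a _).symm,
        smul_add, Multiset.nsmul_singleton, Multiset.coe_replicate]

lemma sorted_flatMap_replicate (m : ℕ) (s : List ℝ) (hs : List.Pairwise (· ≤ ·) s) :
    List.Pairwise (· ≤ ·) (s.flatMap fun a => List.replicate m a) := by
  induction s with
  | nil => simp
  | cons a t ih =>
      rw [List.flatMap_cons]
      rw [List.pairwise_append]
      refine ⟨?_, ih hs.of_cons, ?_⟩
      · exact List.pairwise_replicate.mpr (Or.inr le_rfl)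
      · intro x hx y hy
        rw [List.eq_of_mem_replicate hx]
        obtain ⟨b, hb, hyb⟩ := List.mem_flatMap.mp hy
        rw [List.eq_of_mem_replicate hyb]
        exact List.rel_of_pairwise_cons hs hb

lemma getD_flatMap_replicate (m : ℕ) (s : List ℝ) (k r : ℕ) (hr : r < m) :
    (s.flatMap fun a => List.replicate m a).getD (m * k + r) 0 = s.getD k 0 := by
  induction s generalizing k with
  | nil => simp
  | cons a t ih =>
      rw [List.flatMap_cons]
      cases k with
      | zero =>
          rw [Nat.mul_zero, Nat.zero_add,
            List.getD_append (List.replicate m a) _ 0 r (by simpa using hr)]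
          simp [List.getD, List.getElem?_replicate, hr]
      | succ n =>
          have hlen : (List.replicate m a).length ≤ m * (n + 1) + r := by
            simp [Nat.mul_succ]; omega
          rw [List.getD_append_right _ _ _ _ hlen]
          have : m * (n + 1) + r - (List.replicate m a).length = m * n + r := by
            simp [Nat.mul_succ]; omega
          rw [this, ih, List.getD_cons_succ]

/-- The Gini Index satisfies D4 (Cloning): concatenating m ≥ 1 copies of the vector
leaves the Gini Index unchanged. -/
theorem gini_cloning (c : List ℝ) (hc : ∀ x ∈ c, 0 ≤ x) (hsum : 0 < c.sum)
    (m : ℕ) (hm : 1 ≤ m) :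
    gini (List.flatten (List.replicate m c)) = gini c := by
  have hc0 : c ≠ [] := by rintro rfl; simp at hsum
  set N := c.length with hNdef
  have hN : 0 < N := List.length_pos_iff.mpr hc0
  set s := Multiset.sort (c : Multiset ℝ) (· ≤ ·) with hsdef
  set l := List.flatten (List.replicate m c) with hldef
  have hlen : l.length = m * N := by
    simp [hldef, List.length_flatten, List.map_replicate, List.sum_replicate, smul_eq_mul, hNdef]
  have hlsum : l.sum = m * c.sum := sum_flatten_replicate m c
  have hperm : (Multiset.sort (l : Multiset ℝ) (· ≤ ·)).Perm
      (s.flatMap fun a => List.replicate m a) := by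
    rw [← Multiset.coe_eq_coe, Multiset.sort_eq, coe_flatMap_replicate, hldef,
      coe_flatten_replicate]
    congr 1
    exact (Multiset.sort_eq _ _).symm
  have hsort : Multiset.sort (l : Multiset ℝ) (· ≤ ·)
      = s.flatMap fun a => List.replicate m a :=
    List.Perm.eq_of_pairwise' (Multiset.pairwise_sort _ _)
      (sorted_flatMap_replicate m s (Multiset.pairwise_sort _ _)) hperm
  have hm0 : (m : ℝ) ≠ 0 := Nat.cast_ne_zero.mpr (by omega)
  have hN0 : (N : ℝ) ≠ 0 := Nat.cast_ne_zero.mpr hN.ne'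
  have hS0 : c.sum ≠ 0 := ne_of_gt hsum
  have gauss : ∑ r ∈ Finset.range m, (r : ℝ) = m * (m - 1) / 2 := by
    have h := Finset.sum_range_id_mul_two m
    have h2 : ((∑ i ∈ Finset.range m, i : ℕ) : ℝ) * 2 = (m : ℝ) * ((m : ℝ) - 1) := by
      rw [← Nat.cast_ofNat, ← Nat.cast_mul, h]
      push_cast [Nat.cast_sub (by omega : 1 ≤ m)]
      ring
    push_cast at h2
    linarith
  unfold gini
  rw [← hsdef, hlen, hlsum, hsort, sum_range_mul_eq]
  congr 1
  congr 1
  apply Finset.sum_congr rfl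
  intro k hk
  have hterm : ∀ r ∈ Finset.range m,
      (s.flatMap fun a => List.replicate m a).getD (m * k + r) 0 / ((m : ℝ) * c.sum) *
        (((((m * N : ℕ) : ℝ)) - ((m * k + r : ℕ) : ℝ) - 1 / 2) / ((m * N : ℕ) : ℝ))
      = s.getD k 0 / ((m : ℝ) * c.sum) *
        ((((m : ℝ) * N - (m : ℝ) * k - 1 / 2) - r) / ((m : ℝ) * N)) := by
    intro r hr
    rw [getD_flatMap_replicate m s k r (Finset.mem_range.mp hr)]
    push_cast
    ring
  rw [Finset.sum_congr rfl hterm, ← Finset.mul_sum, ← Finset.sum_div,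
    Finset.sum_sub_distrib, Finset.sum_const, Finset.card_range, gauss, nsmul_eq_mul]
  generalize s.getD k 0 = x
  simp only [← hNdef]
  field_simp
  ring
end

section
/- The Gini Index satisfies P2 (Babies): for every vector c = (c₁,…,c_N) of nonnegative reals with Σ_k cₖ > 0, G(c‖0) > G(c), where c‖0 denotes the vector of length N + 1 obtained by appending a zero entry to c. -/
open Finset


lemma sum_getD_eq_sum (l : List ℝ) :
    ∑ k ∈ Finset.range l.length, l.getD k 0 = l.sum := by
  induction l with
  | nil => simp
  | cons a t ih =>
    rw [List.length_cons, Finset.sum_range_succ']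
    simp only [List.getD_cons_succ, List.getD_cons_zero, List.sum_cons, ih]
    ring

/-- The Gini Index satisfies P2 (Babies): appending a zero entry strictly increases the
Gini Index. -/
theorem gini_babies (c : List ℝ) (hc : ∀ x ∈ c, 0 ≤ x) (hsum : 0 < c.sum) :
    gini (c ++ [0]) > gini c := by
  set N := c.length with hN
  have hNpos : 0 < N := by
    rcases c with _ | ⟨a, t⟩
    · simp at hsum
    · simp [hN]
  set s := Multiset.sort ((c : Multiset ℝ)) (· ≤ ·) with hs
  have hperm : s.Perm c := Multiset.coe_eq_coe.mp (Multiset.sort_eq _ _)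
  have hlen : s.length = N := hperm.length_eq
  have hsumS : s.sum = c.sum := hperm.sum_eq
  have hnn : ∀ x ∈ s, 0 ≤ x := fun x hx => hc x (hperm.mem_iff.mp hx)
  have hnnD : ∀ k : ℕ, 0 ≤ s.getD k 0 := by
    intro k
    rcases lt_or_ge k s.length with h | h
    · rw [List.getD_eq_getElem s 0 h]
      exact hnn _ (List.getElem_mem h)
    · rw [List.getD_eq_default s 0 h]
  have hsorted : s.Pairwise (· ≤ ·) := Multiset.pairwise_sort _ _
  have hsort2 : Multiset.sort ((↑(c ++ [(0:ℝ)]) : Multiset ℝ)) (· ≤ ·) = 0 :: s := by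
    exact List.Perm.eq_of_pairwise'
      (Multiset.pairwise_sort _ _)
      (List.pairwise_cons.mpr ⟨hnn, hsorted⟩)
      ((Multiset.coe_eq_coe.mp (Multiset.sort_eq _ _)).trans
        ((List.perm_append_singleton 0 c).trans (List.Perm.cons 0 hperm.symm)))
  have hlen2 : (c ++ [0]).length = N + 1 := by simp [hN]
  have hsum2 : (c ++ [0]).sum = c.sum := by simp
  have hsg : ∑ k ∈ Finset.range N, s.getD k 0 = c.sum := by
    rw [← hlen, sum_getD_eq_sum, hsumS]
  have hP : 0 < ∑ k ∈ Finset.range N, s.getD k 0 * ((N : ℝ) - k - 1 / 2) := by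
    have hstep : c.sum / 2 ≤ ∑ k ∈ Finset.range N, s.getD k 0 * ((N : ℝ) - k - 1 / 2) := by
      rw [← hsg, Finset.sum_div]
      apply Finset.sum_le_sum
      intro k hk
      have hk' : (k : ℝ) + 1 ≤ N := by
        exact_mod_cast Nat.succ_le_of_lt (Finset.mem_range.mp hk)
      have := hnnD k
      nlinarith
    linarith
  have hS0 : c.sum ≠ 0 := hsum.ne'
  have hN0 : ((N : ℝ)) ≠ 0 := by positivity
  have hN1 : ((N : ℝ) + 1) ≠ 0 := by positivity
  unfold gini
  rw [hsort2, hlen2, hsum2, ← hs, ← hN]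
  have hnew : ∑ k ∈ Finset.range (N + 1),
      (0 :: s).getD k 0 / c.sum * ((((N + 1 : ℕ) : ℝ) - k - 1 / 2) / ((N + 1 : ℕ) : ℝ))
      = (∑ k ∈ Finset.range N, s.getD k 0 * ((N : ℝ) - k - 1 / 2)) / (c.sum * ((N : ℝ) + 1)) := by
    rw [Finset.sum_range_succ']
    simp only [List.getD_cons_succ, List.getD_cons_zero, zero_div, zero_mul, add_zero]
    rw [Finset.sum_div]
    apply Finset.sum_congr rfl
    intro k hk
    push_cast
    rw [div_mul_div_comm]
    congr 1
    ring
  have hold : ∑ k ∈ Finset.range N,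
      s.getD k 0 / c.sum * (((N : ℝ) - k - 1 / 2) / ((N : ℕ) : ℝ))
      = (∑ k ∈ Finset.range N, s.getD k 0 * ((N : ℝ) - k - 1 / 2)) / (c.sum * (N : ℝ)) := by
    rw [Finset.sum_div]
    apply Finset.sum_congr rfl
    intro k hk
    rw [div_mul_div_comm]
  rw [hnew, hold]
  have hlt : (∑ k ∈ Finset.range N, s.getD k 0 * ((N : ℝ) - k - 1 / 2)) / (c.sum * ((N : ℝ) + 1))
      < (∑ k ∈ Finset.range N, s.getD k 0 * ((N : ℝ) - k - 1 / 2)) / (c.sum * (N : ℝ)) := by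
    apply div_lt_div_of_pos_left hP
    · positivity
    · nlinarith [hsum]
  linarith
end
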